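/- Let G be a directed non-atomistic Abelian po-group. The following are equivalent: (i) the right wreath product ℤ ⃗wr G satisfies RDP; (ii) the left wreath product ℤ ⃖wr G satisfies RDP; (iii) G satisfies RDP. -/

import Mathlib

/-! Riesz decomposition properties relative to explicit multiplication `mul`,
unit `one`, and order relation `le`, together with the lexicographic product
order and (unrestricted/restricted, right/left) wreath products of po-groups. -/

/-- The Riesz decomposition property (RDP). -/
def RDPWith {M : Type*} (mul : M → M → M) (one : M) (le : M → M → Prop) : Prop :=
  ∀ a₁ a₂ b₁ b₂ : M,
    le one a₁ → le one a₂ → le one b₁ → le one b₂ → mul a₁ a₂ = mul b₁ b₂ →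
    ∃ c₁₁ c₁₂ c₂₁ c₂₂ : M,
      le one c₁₁ ∧ le one c₁₂ ∧ le one c₂₁ ∧ le one c₂₂ ∧
      a₁ = mul c₁₁ c₁₂ ∧ a₂ = mul c₂₁ c₂₂ ∧ b₁ = mul c₁₁ c₂₁ ∧ b₂ = mul c₁₂ c₂₂

/-- The Riesz decomposition property RDP₁ (commutativity below the
cross-diagonal entries `c₁₂`, `c₂₁`). -/
def RDP1With {M : Type*} (mul : M → M → M) (one : M) (le : M → M → Prop) : Prop :=
  ∀ a₁ a₂ b₁ b₂ : M,
    le one a₁ → le one a₂ → le one b₁ → le one b₂ → mul a₁ a₂ = mul b₁ b₂ →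
    ∃ c₁₁ c₁₂ c₂₁ c₂₂ : M,
      le one c₁₁ ∧ le one c₁₂ ∧ le one c₂₁ ∧ le one c₂₂ ∧
      a₁ = mul c₁₁ c₁₂ ∧ a₂ = mul c₂₁ c₂₂ ∧ b₁ = mul c₁₁ c₂₁ ∧ b₂ = mul c₁₂ c₂₂ ∧
      (∀ x y : M, le one x → le x c₁₂ → le one y → le y c₂₁ → mul x y = mul y x)

/-- The Riesz decomposition property RDP₂ (the infimum of `c₁₂` and `c₂₁`
exists and equals `one`; the last clause, together with `le one c₁₂` and
`le one c₂₁`, says exactly that `one` is the greatest lower bound). -/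
def RDP2With {M : Type*} (mul : M → M → M) (one : M) (le : M → M → Prop) : Prop :=
  ∀ a₁ a₂ b₁ b₂ : M,
    le one a₁ → le one a₂ → le one b₁ → le one b₂ → mul a₁ a₂ = mul b₁ b₂ →
    ∃ c₁₁ c₁₂ c₂₁ c₂₂ : M,
      le one c₁₁ ∧ le one c₁₂ ∧ le one c₂₁ ∧ le one c₂₂ ∧
      a₁ = mul c₁₁ c₁₂ ∧ a₂ = mul c₂₁ c₂₂ ∧ b₁ = mul c₁₁ c₂₁ ∧ b₂ = mul c₁₂ c₂₂ ∧
      (∀ z : M, le z c₁₂ → le z c₂₁ → le z one)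

/-- RDP for the sub-po-group carried by the subset `S`. -/
def RDPWithOn {M : Type*} (S : Set M) (mul : M → M → M) (one : M)
    (le : M → M → Prop) : Prop :=
  ∀ a₁ a₂ b₁ b₂ : M, a₁ ∈ S → a₂ ∈ S → b₁ ∈ S → b₂ ∈ S →
    le one a₁ → le one a₂ → le one b₁ → le one b₂ → mul a₁ a₂ = mul b₁ b₂ →
    ∃ c₁₁ c₁₂ c₂₁ c₂₂ : M, c₁₁ ∈ S ∧ c₁₂ ∈ S ∧ c₂₁ ∈ S ∧ c₂₂ ∈ S ∧
      le one c₁₁ ∧ le one c₁₂ ∧ le one c₂₁ ∧ le one c₂₂ ∧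
      a₁ = mul c₁₁ c₁₂ ∧ a₂ = mul c₂₁ c₂₂ ∧ b₁ = mul c₁₁ c₂₁ ∧ b₂ = mul c₁₂ c₂₂

/-- RDP₁ for the sub-po-group carried by the subset `S`. -/
def RDP1WithOn {M : Type*} (S : Set M) (mul : M → M → M) (one : M)
    (le : M → M → Prop) : Prop :=
  ∀ a₁ a₂ b₁ b₂ : M, a₁ ∈ S → a₂ ∈ S → b₁ ∈ S → b₂ ∈ S →
    le one a₁ → le one a₂ → le one b₁ → le one b₂ → mul a₁ a₂ = mul b₁ b₂ →
    ∃ c₁₁ c₁₂ c₂₁ c₂₂ : M, c₁₁ ∈ S ∧ c₁₂ ∈ S ∧ c₂₁ ∈ S ∧ c₂₂ ∈ S ∧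
      le one c₁₁ ∧ le one c₁₂ ∧ le one c₂₁ ∧ le one c₂₂ ∧
      a₁ = mul c₁₁ c₁₂ ∧ a₂ = mul c₂₁ c₂₂ ∧ b₁ = mul c₁₁ c₂₁ ∧ b₂ = mul c₁₂ c₂₂ ∧
      (∀ x y : M, x ∈ S → y ∈ S →
        le one x → le x c₁₂ → le one y → le y c₂₁ → mul x y = mul y x)

/-- RDP₂ for the sub-po-group carried by the subset `S`. -/
def RDP2WithOn {M : Type*} (S : Set M) (mul : M → M → M) (one : M)
    (le : M → M → Prop) : Prop :=
  ∀ a₁ a₂ b₁ b₂ : M, a₁ ∈ S → a₂ ∈ S → b₁ ∈ S → b₂ ∈ S →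
    le one a₁ → le one a₂ → le one b₁ → le one b₂ → mul a₁ a₂ = mul b₁ b₂ →
    ∃ c₁₁ c₁₂ c₂₁ c₂₂ : M, c₁₁ ∈ S ∧ c₁₂ ∈ S ∧ c₂₁ ∈ S ∧ c₂₂ ∈ S ∧
      le one c₁₁ ∧ le one c₁₂ ∧ le one c₂₁ ∧ le one c₂₂ ∧
      a₁ = mul c₁₁ c₁₂ ∧ a₂ = mul c₂₁ c₂₂ ∧ b₁ = mul c₁₁ c₂₁ ∧ b₂ = mul c₁₂ c₂₂ ∧
      (∀ z : M, z ∈ S → le z c₁₂ → le z c₂₁ → le z one)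

/-- The Riesz interpolation property (RIP). -/
def RIPWith {M : Type*} (le : M → M → Prop) : Prop :=
  ∀ a₁ a₂ b₁ b₂ : M, le a₁ b₁ → le a₁ b₂ → le a₂ b₁ → le a₂ b₂ →
    ∃ c : M, le a₁ c ∧ le a₂ c ∧ le c b₁ ∧ le c b₂

/-- RIP for the subposet carried by the subset `S`. -/
def RIPWithOn {M : Type*} (S : Set M) (le : M → M → Prop) : Prop :=
  ∀ a₁ a₂ b₁ b₂ : M, a₁ ∈ S → a₂ ∈ S → b₁ ∈ S → b₂ ∈ S →
    le a₁ b₁ → le a₁ b₂ → le a₂ b₁ → le a₂ b₂ →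
    ∃ c ∈ S, le a₁ c ∧ le a₂ c ∧ le c b₁ ∧ le c b₂

/-- The lexicographic order on a product: `(g₁,h₁) ≤ (g₂,h₂)` iff `g₁ < g₂`,
or `g₁ = g₂` and `h₁ ≤ h₂`. -/
def lexLE {A B : Type*} [PartialOrder A] [LE B] (p q : A × B) : Prop :=
  p.1 < q.1 ∨ (p.1 = q.1 ∧ p.2 ≤ q.2)

/-- A poset is an antilattice if only comparable pairs of elements have a
join or a meet. -/
def IsAntilattice (G : Type*) [PartialOrder G] : Prop :=
  ∀ a b : G, ((∃ s, IsLUB {a, b} s) ∨ (∃ s, IsGLB {a, b} s)) → a ≤ b ∨ b ≤ a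

/-- Multiplication of the unrestricted Wreath product `A Wr G`:
`(n,⟨g_a⟩)·(m,⟨h_a⟩) = (n·m, ⟨g_a·h_{a·n}⟩)`. -/
def wrMul {A G : Type*} [Mul A] [Mul G] (p q : A × (A → G)) : A × (A → G) :=
  (p.1 * q.1, fun a => p.2 a * q.2 (a * p.1))

/-- The unit of the Wreath product `A Wr G`. -/
def wrOne (A G : Type*) [One A] [One G] : A × (A → G) :=
  (1, fun _ => 1)

/-- The order of the Wreath product `A Wr G`: `(n,⟨g_a⟩) ≤ (m,⟨h_a⟩)` iff
`n < m`, or `n = m` and `g_a ≤ h_a` for all `a`. -/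
def wrLE {A G : Type*} [PartialOrder A] [LE G] (p q : A × (A → G)) : Prop :=
  p.1 < q.1 ∨ (p.1 = q.1 ∧ ∀ a, p.2 a ≤ q.2 a)

/-- The carrier of the restricted Wreath product `A wr G`: elements whose
second component equals `1` at all but finitely many places. -/
def wrS (A G : Type*) [One G] : Set (A × (A → G)) :=
  {p | (Function.mulSupport p.2).Finite}

/-- Multiplication of the wreath products over `ℤ`:
`(n,⟨g_i⟩)·(m,⟨h_i⟩) = (n+m, ⟨g_i·h_{i+n}⟩)`. -/
def zwrMul {G : Type*} [Mul G] (p q : ℤ × (ℤ → G)) : ℤ × (ℤ → G) :=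
  (p.1 + q.1, fun i => p.2 i * q.2 (i + p.1))

/-- The unit of the wreath products over `ℤ`. -/
def zwrOne (G : Type*) [One G] : ℤ × (ℤ → G) :=
  (0, fun _ => 1)

/-- The inverse in the wreath products over `ℤ`. -/
def zwrInv {G : Type*} [Inv G] (p : ℤ × (ℤ → G)) : ℤ × (ℤ → G) :=
  (-p.1, fun i => (p.2 (i - p.1))⁻¹)

/-- The carrier of the (restricted) wreath products over `ℤ`: elements with
`g_i = 1` for all but finitely many `i`. -/
def zwrS (G : Type*) [One G] : Set (ℤ × (ℤ → G)) :=
  {p | (Function.mulSupport p.2).Finite}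

/-- Strict positivity in the right wreath product `ℤ →wr G`: either `n > 0`,
or `n = 0`, some `g_i ≠ 1`, and `g_j > 1` where `j` is the greatest index `i`
with `g_i ≠ 1`. -/
def rPos {G : Type*} [One G] [LT G] (p : ℤ × (ℤ → G)) : Prop :=
  0 < p.1 ∨ (p.1 = 0 ∧ ∃ j : ℤ, 1 < p.2 j ∧ ∀ i : ℤ, j < i → p.2 i = 1)

/-- Strict positivity in the left wreath product `ℤ ←wr G`: either `n > 0`,
or `n = 0`, some `g_i ≠ 1`, and `g_j > 1` where `j` is the least index `i`
with `g_i ≠ 1`. -/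
def lPos {G : Type*} [One G] [LT G] (p : ℤ × (ℤ → G)) : Prop :=
  0 < p.1 ∨ (p.1 = 0 ∧ ∃ j : ℤ, 1 < p.2 j ∧ ∀ i : ℤ, i < j → p.2 i = 1)

/-- The order of the right wreath product `ℤ →wr G`. -/
def rLE {G : Type*} [Group G] [LT G] (p q : ℤ × (ℤ → G)) : Prop :=
  p = q ∨ rPos (zwrMul (zwrInv p) q)

/-- The order of the left wreath product `ℤ ←wr G`. -/
def lLE {G : Type*} [Group G] [LT G] (p q : ℤ × (ℤ → G)) : Prop :=
  p = q ∨ lPos (zwrMul (zwrInv p) q)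


set_option linter.unusedSectionVars false
-- Auxiliary material

namespace ZwrAux

section Basic

variable {G : Type*} [CommGroup G] [PartialOrder G]
  [CovariantClass G G (· * ·) (· ≤ ·)]
  [CovariantClass G G (Function.swap (· * ·)) (· ≤ ·)]

local instance ocg : IsOrderedMonoid G :=
  { mul_le_mul_left := fun _ _ h c => mul_le_mul_left h c }

/-- Top-positivity of a function `ℤ → G`. -/
def PosF (φ : ℤ → G) : Prop := ∃ j, 1 < φ j ∧ ∀ i, j < i → φ i = 1

/-- `φ = 1` or top-positive. -/
def KP (φ : ℤ → G) : Prop := φ = (fun _ => 1) ∨ PosF φ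

/-- Order on functions `ℤ → G` induced by top-positivity. -/
def KLE (φ ψ : ℤ → G) : Prop := φ = ψ ∨ PosF (fun i => (φ i)⁻¹ * ψ i)

lemma KLE.refl (φ : ℤ → G) : KLE φ φ := Or.inl rfl

lemma KLE_one_iff (φ : ℤ → G) : KLE (fun _ => 1) φ ↔ KP φ := by
  unfold KLE KP
  constructor
  · rintro (h | h)
    · exact Or.inl h.symm
    · refine Or.inr ?_; simpa using h
  · rintro (h | h)
    · exact Or.inl h.symm
    · refine Or.inr ?_; simpa using h

/- Group laws for `zwrMul`. -/

lemma zwr_assoc (p q r : ℤ × (ℤ → G)) :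
    zwrMul (zwrMul p q) r = zwrMul p (zwrMul q r) := by
  unfold zwrMul; dsimp only; congr 1
  · ring
  · funext i; rw [mul_assoc]; ring_nf

lemma zwr_one_mul (p : ℤ × (ℤ → G)) : zwrMul (zwrOne G) p = p := by
  obtain ⟨n, φ⟩ := p
  unfold zwrMul zwrOne; dsimp only; congr 1
  · ring
  · funext i; simp

lemma zwr_mul_one (p : ℤ × (ℤ → G)) : zwrMul p (zwrOne G) = p := by
  obtain ⟨n, φ⟩ := p
  unfold zwrMul zwrOne; dsimp only; congr 1
  · ring
  · funext i; simp

lemma zwr_inv_one : zwrInv (zwrOne G) = zwrOne G := by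
  unfold zwrInv zwrOne; dsimp only; congr 1
  · funext i; simp

lemma zwr_inv_mul (p : ℤ × (ℤ → G)) : zwrMul (zwrInv p) p = zwrOne G := by
  obtain ⟨n, φ⟩ := p
  unfold zwrMul zwrInv zwrOne; dsimp only; congr 1
  · ring
  · funext i; rw [show i + -n = i - n by ring]; simp

lemma zwr_mul_inv (p : ℤ × (ℤ → G)) : zwrMul p (zwrInv p) = zwrOne G := by
  obtain ⟨n, φ⟩ := p
  unfold zwrMul zwrInv zwrOne; dsimp only; congr 1
  · ring
  · funext i; rw [show i + n - n = i by ring]; simp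

lemma zwr_inv_mul_cancel_left (p q : ℤ × (ℤ → G)) :
    zwrMul (zwrInv p) (zwrMul p q) = q := by
  rw [← zwr_assoc, zwr_inv_mul, zwr_one_mul]

lemma zwr_mul_inv_cancel_left (p q : ℤ × (ℤ → G)) :
    zwrMul p (zwrMul (zwrInv p) q) = q := by
  rw [← zwr_assoc, zwr_mul_inv, zwr_one_mul]

lemma zwr_comm0 (p q : ℤ × (ℤ → G)) (hp : p.1 = 0) (hq : q.1 = 0) :
    zwrMul p q = zwrMul q p := by
  unfold zwrMul; congr 1
  · ring
  · funext i; simp [hp, hq, mul_comm]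

lemma zwr_mul_fst (p q : ℤ × (ℤ → G)) : (zwrMul p q).1 = p.1 + q.1 := rfl

lemma zwr_inv_fst (p : ℤ × (ℤ → G)) : (zwrInv p).1 = -p.1 := rfl

end Basic

end ZwrAux

namespace ZwrAux

section Order

variable {G : Type*} [CommGroup G] [PartialOrder G]
  [CovariantClass G G (· * ·) (· ≤ ·)]
  [CovariantClass G G (Function.swap (· * ·)) (· ≤ ·)]

local instance : IsOrderedMonoid G :=
  { mul_le_mul_left := fun _ _ h c => mul_le_mul_left h c }

lemma rPos_iff (p : ℤ × (ℤ → G)) : rPos p ↔ 0 < p.1 ∨ (p.1 = 0 ∧ PosF p.2) :=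
  Iff.rfl

lemma lPos_iff (p : ℤ × (ℤ → G)) :
    lPos p ↔ 0 < p.1 ∨ (p.1 = 0 ∧ ∃ j : ℤ, 1 < p.2 j ∧ ∀ i : ℤ, i < j → p.2 i = 1) :=
  Iff.rfl

lemma rLE_one_iff (p : ℤ × (ℤ → G)) : rLE (zwrOne G) p ↔ (p = zwrOne G ∨ rPos p) := by
  unfold rLE
  rw [zwr_inv_one, zwr_one_mul]
  exact or_congr eq_comm Iff.rfl

lemma lLE_one_iff (p : ℤ × (ℤ → G)) : lLE (zwrOne G) p ↔ (p = zwrOne G ∨ lPos p) := by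
  unfold lLE
  rw [zwr_inv_one, zwr_one_mul]
  exact or_congr eq_comm Iff.rfl

lemma rLE_refl (p : ℤ × (ℤ → G)) : rLE p p := Or.inl rfl

lemma zwrOne_fst : (zwrOne G).1 = 0 := rfl

lemma rLE_one_of_fst_pos (p : ℤ × (ℤ → G)) (h : 0 < p.1) : rLE (zwrOne G) p :=
  (rLE_one_iff p).mpr (Or.inr (Or.inl h))

lemma rLE_one_of_posF (p : ℤ × (ℤ → G)) (h0 : p.1 = 0) (h : PosF p.2) :
    rLE (zwrOne G) p :=
  (rLE_one_iff p).mpr (Or.inr (Or.inr ⟨h0, h⟩))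

lemma rLE_one_fst_nonneg (p : ℤ × (ℤ → G)) (h : rLE (zwrOne G) p) : 0 ≤ p.1 := by
  rcases (rLE_one_iff p).mp h with h | h
  · rw [h]; exact le_refl 0
  · rcases h with h | ⟨h, _⟩
    · exact le_of_lt h
    · exact le_of_eq h.symm

lemma rLE_one_KP (p : ℤ × (ℤ → G)) (h : rLE (zwrOne G) p) (h0 : p.1 = 0) :
    KP p.2 := by
  rcases (rLE_one_iff p).mp h with h | h
  · exact Or.inl (congrArg Prod.snd h)
  · rcases h with h | ⟨_, h⟩
    · rw [h0] at h; exact absurd h (lt_irrefl 0)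
    · exact Or.inr h

lemma rLE_one_sub {p q : ℤ × (ℤ → G)} (h : rLE p q) :
    rLE (zwrOne G) (zwrMul (zwrInv p) q) := by
  rcases h with h | h
  · rw [h, zwr_inv_mul]; exact rLE_refl _
  · exact (rLE_one_iff _).mpr (Or.inr h)

lemma rLE_sub_one {p q : ℤ × (ℤ → G)} (h : rLE (zwrOne G) (zwrMul (zwrInv p) q)) :
    rLE p q := by
  rcases (rLE_one_iff _).mp h with h | h
  · left
    have := congrArg (fun r => zwrMul p r) h
    rw [zwr_mul_inv_cancel_left, zwr_mul_one] at this
    exact this.symm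
  · exact Or.inr h

/- Support lemmas. -/

lemma mem_zwrS_iff (p : ℤ × (ℤ → G)) : p ∈ zwrS G ↔ (Function.mulSupport p.2).Finite :=
  Iff.rfl

lemma fin_shift {φ : ℤ → G} (h : (Function.mulSupport φ).Finite) (n : ℤ) :
    (Function.mulSupport fun i => φ (i + n)).Finite := by
  have : (Function.mulSupport fun i => φ (i + n)) ⊆ (fun i : ℤ => i + n) ⁻¹' (Function.mulSupport φ) := by
    intro i hi
    exact hi
  exact Set.Finite.subset (Set.Finite.preimage (Set.injOn_of_injective (add_left_injective n)) h) this

lemma fin_shift' {φ : ℤ → G} (h : (Function.mulSupport φ).Finite) (n : ℤ) :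
    (Function.mulSupport fun i => φ (i - n)).Finite := fin_shift h (-n)

lemma fin_mulf {φ ψ : ℤ → G} (h1 : (Function.mulSupport φ).Finite)
    (h2 : (Function.mulSupport ψ).Finite) :
    (Function.mulSupport fun i => φ i * ψ i).Finite := by
  refine Set.Finite.subset (Set.Finite.union h1 h2) ?_
  intro i hi
  rw [Function.mem_mulSupport] at hi
  by_contra hc
  simp only [Set.mem_union, Function.mem_mulSupport, not_or, not_not] at hc
  exact hi (by rw [hc.1, hc.2, one_mul])

lemma fin_invf {φ : ℤ → G} (h : (Function.mulSupport φ).Finite) :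
    (Function.mulSupport fun i => (φ i)⁻¹).Finite := by
  refine Set.Finite.subset h ?_
  intro i hi
  simp only [Function.mem_mulSupport] at hi ⊢
  intro h'
  exact hi (by rw [h', inv_one])

lemma zwrS_one : zwrOne G ∈ zwrS G := by
  have : Function.mulSupport (zwrOne G).2 = ∅ := by
    simp [zwrOne, Function.mulSupport]
  rw [mem_zwrS_iff, this]
  exact Set.finite_empty

lemma zwrS_mul {p q : ℤ × (ℤ → G)} (hp : p ∈ zwrS G) (hq : q ∈ zwrS G) :
    zwrMul p q ∈ zwrS G := by
  rw [mem_zwrS_iff] at *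
  exact fin_mulf hp (fin_shift hq p.1)

lemma zwrS_inv {p : ℤ × (ℤ → G)} (hp : p ∈ zwrS G) : zwrInv p ∈ zwrS G := by
  rw [mem_zwrS_iff] at *
  exact fin_invf (fin_shift' hp p.1)

/-- Extract the top of the support. -/
lemma exists_top {φ : ℤ → G} (hf : (Function.mulSupport φ).Finite)
    (hne : φ ≠ fun _ => 1) : ∃ t, φ t ≠ 1 ∧ ∀ i, t < i → φ i = 1 := by
  have hS : hf.toFinset.Nonempty := by
    rw [Finset.nonempty_iff_ne_empty]
    intro h
    apply hne
    funext i
    by_contra hc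
    have : i ∈ hf.toFinset := by simp [Function.mem_mulSupport, hc]
    rw [h] at this
    exact absurd this (Finset.notMem_empty i)
  refine ⟨hf.toFinset.max' hS, ?_, ?_⟩
  · have := hf.toFinset.max'_mem hS
    simpa [Function.mem_mulSupport] using this
  · intro i hi
    by_contra hc
    have : i ∈ hf.toFinset := by simp [Function.mem_mulSupport, hc]
    exact absurd (hf.toFinset.le_max' i this) (not_le.mpr hi)

/- Directedness helpers. -/

lemma exists_lb (hdir : ∀ x y : G, ∃ z : G, x ≤ z ∧ y ≤ z) (x y : G) :
    ∃ w, w ≤ x ∧ w ≤ y := by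
  obtain ⟨z, h1, h2⟩ := hdir x⁻¹ y⁻¹
  exact ⟨z⁻¹, by simpa using inv_le_inv' h1, by simpa using inv_le_inv' h2⟩

lemma exists_one_lt (hdir : ∀ x y : G, ∃ z : G, x ≤ z ∧ y ≤ z) (c : G)
    (h : ¬ c ≤ 1) : ∃ p : G, 1 < p := by
  obtain ⟨w, hw1, hw2⟩ := hdir c 1
  refine ⟨w, lt_of_le_of_ne hw2 ?_⟩
  intro heq
  exact h (heq ▸ hw1)

/-- Riesz interpolation from RDP. -/
lemma grip (hrdp : RDPWith (fun a b : G => a * b) 1 (· ≤ ·))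
    (x₁ x₂ y₁ y₂ : G) (h11 : x₁ ≤ y₁) (h12 : x₁ ≤ y₂) (h21 : x₂ ≤ y₁) (h22 : x₂ ≤ y₂) :
    ∃ z, x₁ ≤ z ∧ x₂ ≤ z ∧ z ≤ y₁ ∧ z ≤ y₂ := by
  obtain ⟨c11, c12, c21, c22, p11, p12, p21, p22, e1, e2, e3, e4⟩ :=
    hrdp (y₁ / x₁) (y₂ / x₂) (y₁ / x₂) (y₂ / x₁)
      (one_le_div'.mpr h11) (one_le_div'.mpr h22) (one_le_div'.mpr h21) (one_le_div'.mpr h12)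
      (by dsimp only; rw [div_mul_div_comm, div_mul_div_comm, mul_comm x₁ x₂])
  dsimp only at e1 e2 e3 e4
  have key : x₁ * c12 = x₂ * c21 := by
    have hA : x₁ * (c12 * c22) = y₂ := by
      rw [← e4, mul_div_cancel]
    have hB : x₂ * (c21 * c22) = y₂ := by
      rw [← e2, mul_div_cancel]
    have := hA.trans hB.symm
    rw [← mul_assoc, ← mul_assoc] at this
    exact mul_right_cancel this
  refine ⟨x₁ * c12, le_mul_of_one_le_right' p12, ?_, ?_, ?_⟩
  · rw [key]; exact le_mul_of_one_le_right' p21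
  · have : x₁ * (c11 * c12) = y₁ := by rw [← e1, mul_div_cancel]
    calc x₁ * c12 ≤ x₁ * (c11 * c12) := by
          exact mul_le_mul_right (le_mul_of_one_le_left' p11) x₁
      _ = y₁ := this
  · have : x₂ * (c21 * c22) = y₂ := by rw [← e2, mul_div_cancel]
    calc x₁ * c12 = x₂ * c21 := key
      _ ≤ x₂ * (c21 * c22) := mul_le_mul_right (le_mul_of_one_le_right' p22) x₂
      _ = y₂ := this

end Order

end ZwrAux

namespace ZwrAux

section Interp

variable {G : Type*} [CommGroup G] [PartialOrder G]
  [CovariantClass G G (· * ·) (· ≤ ·)]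
  [CovariantClass G G (Function.swap (· * ·)) (· ≤ ·)]

local instance : IsOrderedMonoid G :=
  { mul_le_mul_left := fun _ _ h c => mul_le_mul_left h c }

lemma posF_ext {φ ψ : ℤ → G} (h : ∀ i, φ i = ψ i) : PosF φ ↔ PosF ψ := by
  rw [funext h]

lemma one_lt_inv_mul_of_lt {a b : G} (h : a < b) : 1 < a⁻¹ * b := by
  have := mul_lt_mul_right h a⁻¹
  rwa [inv_mul_cancel] at this

lemma lt_of_one_lt_inv_mul {a b : G} (h : 1 < a⁻¹ * b) : a < b := by
  have := mul_lt_mul_right h a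
  rwa [mul_one, mul_inv_cancel_left] at this

lemma one_le_inv_mul_of_le {a b : G} (h : a ≤ b) : 1 ≤ a⁻¹ * b := by
  have := mul_le_mul_right h a⁻¹
  rwa [inv_mul_cancel] at this

lemma fin_update {φ : ℤ → G} (h : (Function.mulSupport φ).Finite) (t : ℤ) (v : G) :
    (Function.mulSupport fun i => if i = t then v else φ i).Finite := by
  refine Set.Finite.subset (h.union (Set.finite_singleton t)) ?_
  intro i hi
  rw [Function.mem_mulSupport] at hi
  by_cases hit : i = t
  · exact Or.inr (by simp [hit])
  · exact Or.inl (by rw [Function.mem_mulSupport]; simpa [hit] using hi)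

/-- The interpolation lemma for the top-positivity order on `ℤ → G`. -/
lemma krip (hdir : ∀ x y : G, ∃ z : G, x ≤ z ∧ y ≤ z)
    (hrdp : RDPWith (fun a b : G => a * b) 1 (· ≤ ·))
    (x y₁ y₂ : ℤ → G)
    (hfx : (Function.mulSupport x).Finite)
    (hf1 : (Function.mulSupport y₁).Finite)
    (hf2 : (Function.mulSupport y₂).Finite)
    (h1 : KLE (fun _ => 1) y₁) (h2 : KLE (fun _ => 1) y₂)
    (h3 : KLE x y₁) (h4 : KLE x y₂) :
    ∃ z : ℤ → G, (Function.mulSupport z).Finite ∧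
      KLE (fun _ => 1) z ∧ KLE x z ∧ KLE z y₁ ∧ KLE z y₂ := by
  by_cases hx1 : KLE x (fun _ => 1)
  · refine ⟨fun _ => 1, ?_, KLE.refl _, hx1, h1, h2⟩
    simpa using Set.finite_empty
  by_cases h1x : KLE (fun _ => 1) x
  · exact ⟨x, hfx, h1x, KLE.refl _, h3, h4⟩
  by_cases h12 : KLE y₁ y₂
  · exact ⟨y₁, hf1, h1, h3, KLE.refl _, h12⟩
  by_cases h21 : KLE y₂ y₁
  · exact ⟨y₂, hf2, h2, h4, h21, KLE.refl _⟩
  -- basic distinctness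
  have hxne : x ≠ fun _ => 1 := fun h => hx1 (Or.inl h)
  have hy12 : y₁ ≠ y₂ := fun h => h12 (Or.inl h)
  have hxy1 : x ≠ y₁ := fun h => h12 (h ▸ h4)
  have hxy2 : x ≠ y₂ := fun h => h21 (h ▸ h3)
  have hy1ne : y₁ ≠ fun _ => 1 := fun h => hx1 (h ▸ h3)
  have hy2ne : y₂ ≠ fun _ => 1 := fun h => hx1 (h ▸ h4)
  -- positivity data
  have Py₁ : PosF y₁ :=
    (posF_ext (fun i => by simp)).mp (Or.resolve_left h1 (fun h => hy1ne h.symm))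
  have Py₂ : PosF y₂ :=
    (posF_ext (fun i => by simp)).mp (Or.resolve_left h2 (fun h => hy2ne h.symm))
  have P₁ : PosF (fun i => (x i)⁻¹ * y₁ i) := Or.resolve_left h3 hxy1
  have P₂ : PosF (fun i => (x i)⁻¹ * y₂ i) := Or.resolve_left h4 hxy2
  obtain ⟨r, hr1, hr2⟩ := P₁
  obtain ⟨s, hs1, hs2⟩ := P₂
  replace hr1 : 1 < (x r)⁻¹ * y₁ r := hr1
  replace hr2 : ∀ i, r < i → (x i)⁻¹ * y₁ i = 1 := hr2
  replace hs1 : 1 < (x s)⁻¹ * y₂ s := hs1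
  replace hs2 : ∀ i, s < i → (x i)⁻¹ * y₂ i = 1 := hs2
  have nPx : ¬ PosF x := fun h =>
    h1x (Or.inr ((posF_ext (fun i => by simp)).mpr h))
  have nPxinv : ¬ PosF (fun i => (x i)⁻¹) := fun h =>
    hx1 (Or.inr ((posF_ext (fun i => by simp)).mpr h))
  -- the top difference of y₁, y₂
  have hdne : (fun i => (y₁ i)⁻¹ * y₂ i) ≠ fun _ => 1 := by
    intro h
    apply hy12
    funext i
    exact inv_mul_eq_one.mp (congrFun h i)
  obtain ⟨j₀, hj₀ne, hj₀top⟩ := exists_top (fin_mulf (fin_invf hf1) hf2) hdne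
  have hyeq : ∀ i, j₀ < i → y₁ i = y₂ i := fun i hi => inv_mul_eq_one.mp (hj₀top i hi)
  have hVne : y₁ j₀ ≠ y₂ j₀ := fun h => hj₀ne (by rw [h, inv_mul_cancel])
  have hc1 : ¬ 1 < (y₁ j₀)⁻¹ * y₂ j₀ := fun h => h12 (Or.inr ⟨j₀, h, hj₀top⟩)
  have hc2 : ¬ 1 < (y₂ j₀)⁻¹ * y₁ j₀ := by
    intro h
    refine h21 (Or.inr ⟨j₀, h, ?_⟩)
    intro i hi
    show (y₂ i)⁻¹ * y₁ i = 1
    rw [hyeq i hi, inv_mul_cancel]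
  have hnle12 : ¬ y₁ j₀ ≤ y₂ j₀ := by
    intro h
    exact hc1 (lt_of_le_of_ne (one_le_inv_mul_of_le h)
      (fun he => hVne (inv_mul_eq_one.mp he.symm)))
  have hnle21 : ¬ y₂ j₀ ≤ y₁ j₀ := by
    intro h
    exact hc2 (lt_of_le_of_ne (one_le_inv_mul_of_le h)
      (fun he => hVne (inv_mul_eq_one.mp he.symm).symm))
  obtain ⟨p, hp⟩ : ∃ p : G, 1 < p := by
    apply exists_one_lt hdir ((y₁ j₀)⁻¹ * y₂ j₀)
    intro hle
    apply hnle21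
    have := mul_le_mul_right hle (y₁ j₀)
    rwa [mul_inv_cancel_left, mul_one] at this
  by_cases hrj : j₀ < r
  · -- Case C1
    have hYex : ∃ i, j₀ < i ∧ y₁ i ≠ 1 := by
      by_contra hY
      push_neg at hY
      apply nPxinv
      refine ⟨r, ?_, ?_⟩
      · show 1 < (x r)⁻¹
        have h' := hr1
        rw [hY r hrj, mul_one] at h'
        exact h'
      · intro i hi
        show (x i)⁻¹ = 1
        have h2' := hr2 i hi
        rw [hY i (lt_trans hrj hi), mul_one] at h2'
        exact h2'
    obtain ⟨i₀, hi₀, hi₀ne⟩ := hYex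
    obtain ⟨q₁, hq₁, hq₂⟩ := Py₁
    have hq₁j : j₀ < q₁ := by
      by_contra hq
      push_neg at hq
      exact hi₀ne (hq₂ i₀ (lt_of_le_of_lt hq hi₀))
    obtain ⟨w, hw1, hw2⟩ := exists_lb hdir (y₁ j₀) (y₂ j₀)
    refine ⟨fun i => if j₀ < i then y₁ i else (if i = j₀ then w * p⁻¹ else 1),
      ?_, ?_, ?_, ?_, ?_⟩
    · -- finiteness
      refine Set.Finite.subset (hf1.union (Set.finite_singleton j₀)) ?_
      intro i hi
      rw [Function.mem_mulSupport] at hi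
      by_cases hij : j₀ < i
      · exact Or.inl (by rw [Function.mem_mulSupport]; simpa [hij] using hi)
      · by_cases hie : i = j₀
        · exact Or.inr (by simp [hie])
        · exact absurd (by simp [hij, hie]) hi
    · -- KLE 1 z
      refine Or.inr ⟨q₁, ?_, ?_⟩
      · simpa [hq₁j] using hq₁
      · intro i hi
        have : j₀ < i := lt_trans hq₁j hi
        simp [this, hq₂ i hi]
    · -- KLE x z
      refine Or.inr ⟨r, ?_, ?_⟩
      · simpa [hrj] using hr1
      · intro i hi
        have : j₀ < i := lt_trans hrj hi
        simpa [this] using hr2 i hi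
    · -- KLE z y₁
      refine Or.inr ⟨j₀, ?_, ?_⟩
      · have h1le : (1:G) ≤ w⁻¹ * y₁ j₀ := one_le_inv_mul_of_le hw1
        have : (1:G) < p * (w⁻¹ * y₁ j₀) := Left.one_lt_mul_of_lt_of_le hp h1le
        simpa [mul_inv_rev, mul_assoc] using this
      · intro i hi
        simp [hi]
    · -- KLE z y₂
      refine Or.inr ⟨j₀, ?_, ?_⟩
      · have h1le : (1:G) ≤ w⁻¹ * y₂ j₀ := one_le_inv_mul_of_le hw2
        have : (1:G) < p * (w⁻¹ * y₂ j₀) := Left.one_lt_mul_of_lt_of_le hp h1le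
        simpa [mul_inv_rev, mul_assoc] using this
      · intro i hi
        simp [hi, ← hyeq i hi]
  · -- Case C2 : r ≤ j₀
    have hrle : r ≤ j₀ := not_lt.mp hrj
    have hxy_hi : ∀ i, j₀ < i → x i = y₁ i := fun i hi =>
      inv_mul_eq_one.mp (hr2 i (lt_of_le_of_lt hrle hi))
    have hY : ∀ i, j₀ < i → y₁ i = 1 := by
      by_contra hY
      push_neg at hY
      obtain ⟨i₀, hi₀, hi₀ne⟩ := hY
      obtain ⟨q₁, hq₁, hq₂⟩ := Py₁
      have hq₁j : j₀ < q₁ := by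
        by_contra hq
        push_neg at hq
        exact hi₀ne (hq₂ i₀ (lt_of_le_of_lt hq hi₀))
      apply nPx
      refine ⟨q₁, ?_, ?_⟩
      · rw [hxy_hi q₁ hq₁j]; exact hq₁
      · intro i hi
        rw [hxy_hi i (lt_trans hq₁j hi)]
        exact hq₂ i hi
    have hY2 : ∀ i, j₀ < i → y₂ i = 1 := fun i hi => (hyeq i hi) ▸ hY i hi
    have hx_hi : ∀ i, j₀ < i → x i = 1 := fun i hi => (hxy_hi i hi).trans (hY i hi)
    obtain ⟨q₁, hq₁, hq₂⟩ := Py₁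
    have hq₁le : q₁ ≤ j₀ := by
      by_contra h
      push_neg at h
      rw [hY q₁ h] at hq₁
      exact lt_irrefl 1 hq₁
    have hV₁ : 1 < y₁ j₀ := by
      rcases eq_or_lt_of_le hq₁le with heq | hlt
      · exact heq ▸ hq₁
      · exfalso
        have hV1eq : y₁ j₀ = 1 := hq₂ j₀ hlt
        obtain ⟨q₂, hq₂', hq₂''⟩ := Py₂
        have hq₂le : q₂ ≤ j₀ := by
          by_contra h
          push_neg at h
          rw [hY2 q₂ h] at hq₂'
          exact lt_irrefl 1 hq₂'
        rcases eq_or_lt_of_le hq₂le with heq2 | hlt2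
        · exact hc1 (by rw [hV1eq, inv_one, one_mul]; exact heq2 ▸ hq₂')
        · exact hj₀ne (by rw [hV1eq, hq₂'' j₀ hlt2, inv_one, one_mul])
    have hV₂ : 1 < y₂ j₀ := by
      obtain ⟨q₂, hq₂', hq₂''⟩ := Py₂
      have hq₂le : q₂ ≤ j₀ := by
        by_contra h
        push_neg at h
        rw [hY2 q₂ h] at hq₂'
        exact lt_irrefl 1 hq₂'
      rcases eq_or_lt_of_le hq₂le with heq2 | hlt2
      · exact heq2 ▸ hq₂'
      · exfalso
        apply hc2
        rw [hq₂'' j₀ hlt2, inv_one, one_mul]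
        exact hV₁
    have hXlt1 : 1 < (x j₀)⁻¹ * y₁ j₀ := by
      rcases eq_or_lt_of_le hrle with heq | hlt
      · exact heq ▸ hr1
      · exfalso
        have hXeq : x j₀ = y₁ j₀ := inv_mul_eq_one.mp (hr2 j₀ hlt)
        exact nPx ⟨j₀, hXeq ▸ hV₁, hx_hi⟩
    have hsle : s ≤ j₀ := by
      by_contra h
      push_neg at h
      rw [hx_hi s h, hY2 s h, inv_one, one_mul] at hs1
      exact lt_irrefl 1 hs1
    have hXlt2 : 1 < (x j₀)⁻¹ * y₂ j₀ := by
      rcases eq_or_lt_of_le hsle with heq | hlt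
      · exact heq ▸ hs1
      · exfalso
        have hXeq : x j₀ = y₂ j₀ := inv_mul_eq_one.mp (hs2 j₀ hlt)
        exact nPx ⟨j₀, hXeq ▸ hV₂, hx_hi⟩
    by_cases hX1 : x j₀ = 1
    · -- Case C2a
      obtain ⟨m, hm, hm2⟩ := exists_top hfx hxne
      have hmj : m < j₀ := by
        rcases lt_trichotomy m j₀ with h | h | h
        · exact h
        · exact absurd (h ▸ hX1) hm
        · exact absurd (hx_hi m h) hm
      obtain ⟨u, hu1, hu2⟩ := hdir (x m) 1
      refine ⟨fun i => if i = m then u * p else x i, fin_update hfx m (u * p),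
        ?_, ?_, ?_, ?_⟩
      · -- KLE 1 z
        refine Or.inr ⟨m, ?_, ?_⟩
        · simpa using Left.one_lt_mul_of_le_of_lt hu2 hp
        · intro i hi
          simp [(ne_of_gt hi), hm2 i hi]
      · -- KLE x z
        refine Or.inr ⟨m, ?_, ?_⟩
        · have h1le : (1:G) ≤ (x m)⁻¹ * u := one_le_inv_mul_of_le hu1
          have : (1:G) < ((x m)⁻¹ * u) * p := Left.one_lt_mul_of_le_of_lt h1le hp
          simpa [mul_assoc] using this
        · intro i hi
          simp [(ne_of_gt hi)]
      · -- KLE z y₁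
        refine Or.inr ⟨j₀, ?_, ?_⟩
        · simpa [(ne_of_gt hmj)] using hXlt1
        · intro i hi
          have hne : i ≠ m := ne_of_gt (lt_trans hmj hi)
          simp [hne, hx_hi i hi, hY i hi]
      · -- KLE z y₂
        refine Or.inr ⟨j₀, ?_, ?_⟩
        · simpa [(ne_of_gt hmj)] using hXlt2
        · intro i hi
          have hne : i ≠ m := ne_of_gt (lt_trans hmj hi)
          simp [hne, hx_hi i hi, hY2 i hi]
    · -- Case C2b
      obtain ⟨Z, hZX, hZ1, hZV₁, hZV₂⟩ := grip hrdp (x j₀) 1 (y₁ j₀) (y₂ j₀)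
        (le_of_lt (lt_of_one_lt_inv_mul hXlt1))
        (le_of_lt (lt_of_one_lt_inv_mul hXlt2))
        (le_of_lt hV₁) (le_of_lt hV₂)
      have hXneZ : x j₀ ≠ Z := by
        intro h
        have : 1 < x j₀ := lt_of_le_of_ne (h ▸ hZ1) (fun he => hX1 he.symm)
        exact nPx ⟨j₀, this, hx_hi⟩
      have hZneV₁ : Z ≠ y₁ j₀ := by
        intro h
        exact hnle12 (h ▸ hZV₂)
      have hZneV₂ : Z ≠ y₂ j₀ := by
        intro h
        exact hnle21 (h ▸ hZV₁)
      have hZgt1 : 1 < Z := by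
        rcases eq_or_lt_of_le hZ1 with heq | hlt
        · exfalso
          have hxlt : x j₀ < 1 := lt_of_le_of_ne (heq ▸ hZX) hX1
          apply nPxinv
          refine ⟨j₀, Left.one_lt_inv_iff.mpr hxlt, ?_⟩
          intro i hi
          show (x i)⁻¹ = 1
          rw [hx_hi i hi, inv_one]
        · exact hlt
      refine ⟨fun i => if i = j₀ then Z else x i, fin_update hfx j₀ Z,
        ?_, ?_, ?_, ?_⟩
      · refine Or.inr ⟨j₀, ?_, ?_⟩
        · simpa using hZgt1
        · intro i hi
          simp [(ne_of_gt hi), hx_hi i hi]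
      · refine Or.inr ⟨j₀, ?_, ?_⟩
        · simpa using one_lt_inv_mul_of_lt (lt_of_le_of_ne hZX hXneZ)
        · intro i hi
          simp [(ne_of_gt hi)]
      · refine Or.inr ⟨j₀, ?_, ?_⟩
        · simpa using one_lt_inv_mul_of_lt (lt_of_le_of_ne hZV₁ hZneV₁)
        · intro i hi
          simp [(ne_of_gt hi), hx_hi i hi, hY i hi]
      · refine Or.inr ⟨j₀, ?_, ?_⟩
        · simpa using one_lt_inv_mul_of_lt (lt_of_le_of_ne hZV₂ hZneV₂)
        · intro i hi
          simp [(ne_of_gt hi), hx_hi i hi, hY2 i hi]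

end Interp

end ZwrAux

namespace ZwrAux

section Core

variable {G : Type*} [CommGroup G] [PartialOrder G]
  [CovariantClass G G (· * ·) (· ≤ ·)]
  [CovariantClass G G (Function.swap (· * ·)) (· ≤ ·)]

local instance : IsOrderedMonoid G :=
  { mul_le_mul_left := fun _ _ h c => mul_le_mul_left h c }

/-- RDP for the restricted power of `G` with the top-positivity order. -/
lemma kcore (hdir : ∀ x y : G, ∃ z : G, x ≤ z ∧ y ≤ z)
    (hrdp : RDPWith (fun a b : G => a * b) 1 (· ≤ ·))
    (f₁ f₂ h₁ h₂ : ℤ → G)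
    (hff1 : (Function.mulSupport f₁).Finite)
    (hff2 : (Function.mulSupport f₂).Finite)
    (hfh1 : (Function.mulSupport h₁).Finite)
    (hfh2 : (Function.mulSupport h₂).Finite)
    (k1 : KP f₁) (k2 : KP f₂) (k3 : KP h₁) (k4 : KP h₂)
    (hm : ∀ i, f₁ i * f₂ i = h₁ i * h₂ i) :
    ∃ u11 u12 u21 u22 : ℤ → G,
      (Function.mulSupport u11).Finite ∧ (Function.mulSupport u12).Finite ∧
      (Function.mulSupport u21).Finite ∧ (Function.mulSupport u22).Finite ∧
      KP u11 ∧ KP u12 ∧ KP u21 ∧ KP u22 ∧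
      (∀ i, f₁ i = u11 i * u12 i) ∧ (∀ i, f₂ i = u21 i * u22 i) ∧
      (∀ i, h₁ i = u11 i * u21 i) ∧ (∀ i, h₂ i = u12 i * u22 i) := by
  have key : ∀ i, (h₁ i * (f₂ i)⁻¹)⁻¹ * f₁ i = h₂ i := by
    intro i
    refine mul_left_cancel (a := h₁ i) ?_
    rw [← hm i]
    simp [mul_inv_rev, mul_comm, mul_left_comm, mul_assoc]
  have key2 : ∀ i, (h₁ i * (f₂ i)⁻¹)⁻¹ * h₁ i = f₂ i := by
    intro i
    simp [mul_inv_rev, mul_comm, mul_left_comm, mul_assoc]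
  have hfx : (Function.mulSupport fun i => h₁ i * (f₂ i)⁻¹).Finite :=
    fin_mulf hfh1 (fin_invf hff2)
  have hx1 : KLE (fun i => h₁ i * (f₂ i)⁻¹) f₁ := by
    rcases k4 with h | h
    · left
      funext i
      have hmi := hm i
      rw [congrFun h i, mul_one] at hmi
      exact (eq_mul_inv_iff_mul_eq.mpr hmi).symm
    · right
      exact (posF_ext (fun i => (key i).symm)).mp h
  have hx2 : KLE (fun i => h₁ i * (f₂ i)⁻¹) h₁ := by
    rcases k2 with h | h
    · left
      funext i
      rw [congrFun h i, inv_one, mul_one]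
    · right
      exact (posF_ext (fun i => (key2 i).symm)).mp h
  obtain ⟨u, hfu, hu1, hxu, huy1, huy2⟩ :=
    krip hdir hrdp (fun i => h₁ i * (f₂ i)⁻¹) f₁ h₁ hfx hff1 hfh1
      ((KLE_one_iff f₁).mpr k1) ((KLE_one_iff h₁).mpr k3) hx1 hx2
  refine ⟨u, fun i => (u i)⁻¹ * f₁ i, fun i => (u i)⁻¹ * h₁ i,
    fun i => (h₁ i * (f₂ i)⁻¹)⁻¹ * u i,
    hfu, fin_mulf (fin_invf hfu) hff1, fin_mulf (fin_invf hfu) hfh1,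
    fin_mulf (fin_invf hfx) hfu, ?_, ?_, ?_, ?_, ?_, ?_, ?_, ?_⟩
  · exact (KLE_one_iff u).mp hu1
  · rcases huy1 with h | h
    · exact Or.inl (funext fun i => by rw [h, inv_mul_cancel])
    · exact Or.inr h
  · rcases huy2 with h | h
    · exact Or.inl (funext fun i => by rw [h, inv_mul_cancel])
    · exact Or.inr h
  · rcases hxu with h | h
    · exact Or.inl (funext fun i => by rw [← h, inv_mul_cancel])
    · exact Or.inr h
  · exact fun i => (mul_inv_cancel_left (u i) (f₁ i)).symm
  · intro i
    have : (u i)⁻¹ * h₁ i * ((h₁ i * (f₂ i)⁻¹)⁻¹ * u i)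
        = (h₁ i * (f₂ i)⁻¹)⁻¹ * h₁ i := by
      simp [mul_comm, mul_left_comm, mul_assoc]
    rw [this, key2 i]
  · exact fun i => (mul_inv_cancel_left (u i) (h₁ i)).symm
  · intro i
    have : (u i)⁻¹ * f₁ i * ((h₁ i * (f₂ i)⁻¹)⁻¹ * u i)
        = (h₁ i * (f₂ i)⁻¹)⁻¹ * f₁ i := by
      simp [mul_comm, mul_left_comm, mul_assoc]
    rw [this, key i]

end Core

end ZwrAux

namespace ZwrAux

section Forward

variable {G : Type*} [CommGroup G] [PartialOrder G]
  [CovariantClass G G (· * ·) (· ≤ ·)]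
  [CovariantClass G G (Function.swap (· * ·)) (· ≤ ·)]

local instance : IsOrderedMonoid G :=
  { mul_le_mul_left := fun _ _ h c => mul_le_mul_left h c }

/-- The target existential statement for the wreath RDP. -/
def Goal (a₁ a₂ b₁ b₂ : ℤ × (ℤ → G)) : Prop :=
  ∃ c₁₁ c₁₂ c₂₁ c₂₂ : ℤ × (ℤ → G),
    c₁₁ ∈ zwrS G ∧ c₁₂ ∈ zwrS G ∧ c₂₁ ∈ zwrS G ∧ c₂₂ ∈ zwrS G ∧
    rLE (zwrOne G) c₁₁ ∧ rLE (zwrOne G) c₁₂ ∧ rLE (zwrOne G) c₂₁ ∧ rLE (zwrOne G) c₂₂ ∧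
    a₁ = zwrMul c₁₁ c₁₂ ∧ a₂ = zwrMul c₂₁ c₂₂ ∧
    b₁ = zwrMul c₁₁ c₂₁ ∧ b₂ = zwrMul c₁₂ c₂₂

lemma rLE_one_of_KP (φ : ℤ → G) (h : KP φ) : rLE (zwrOne G) ((0:ℤ), φ) := by
  rcases h with h | h
  · exact (rLE_one_iff _).mpr (Or.inl (Prod.ext_iff.mpr ⟨rfl, h⟩))
  · exact rLE_one_of_posF _ rfl h

lemma matA {a₁ a₂ b₁ b₂ : ℤ × (ℤ → G)}
    (ha₁ : a₁ ∈ zwrS G) (hb₁ : b₁ ∈ zwrS G) (hb₂ : b₂ ∈ zwrS G)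
    (p₁ : rLE (zwrOne G) a₁) (p₄ : rLE (zwrOne G) b₂)
    (pc : rLE (zwrOne G) (zwrMul (zwrInv a₁) b₁))
    (hEq : zwrMul a₁ a₂ = zwrMul b₁ b₂) : Goal a₁ a₂ b₁ b₂ := by
  refine ⟨a₁, zwrOne G, zwrMul (zwrInv a₁) b₁, b₂,
    ha₁, zwrS_one, zwrS_mul (zwrS_inv ha₁) hb₁, hb₂,
    p₁, rLE_refl _, pc, p₄, ?_, ?_, ?_, ?_⟩
  · exact (zwr_mul_one a₁).symm
  · rw [zwr_assoc, ← hEq, zwr_inv_mul_cancel_left]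
  · exact (zwr_mul_inv_cancel_left a₁ b₁).symm
  · exact (zwr_one_mul b₂).symm

lemma matB {a₁ a₂ b₁ b₂ : ℤ × (ℤ → G)}
    (ha₁ : a₁ ∈ zwrS G) (ha₂ : a₂ ∈ zwrS G) (hb₁ : b₁ ∈ zwrS G)
    (p₂ : rLE (zwrOne G) a₂) (p₃ : rLE (zwrOne G) b₁)
    (pc : rLE (zwrOne G) (zwrMul (zwrInv b₁) a₁))
    (hEq : zwrMul a₁ a₂ = zwrMul b₁ b₂) : Goal a₁ a₂ b₁ b₂ := by
  refine ⟨b₁, zwrMul (zwrInv b₁) a₁, zwrOne G, a₂,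
    hb₁, zwrS_mul (zwrS_inv hb₁) ha₁, zwrS_one, ha₂,
    p₃, pc, rLE_refl _, p₂, ?_, ?_, ?_, ?_⟩
  · exact (zwr_mul_inv_cancel_left b₁ a₁).symm
  · exact (zwr_one_mul a₂).symm
  · exact (zwr_mul_one b₁).symm
  · rw [zwr_assoc, hEq, zwr_inv_mul_cancel_left]

lemma matC {a₁ a₂ b₁ b₂ : ℤ × (ℤ → G)}
    (ha₁ : a₁ ∈ zwrS G) (ha₂ : a₂ ∈ zwrS G) (hb₁ : b₁ ∈ zwrS G)
    (p₁ : rLE (zwrOne G) a₁) (p₃ : rLE (zwrOne G) b₁)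
    (ha0 : a₁.1 = 0) (hb0 : b₁.1 = 0) (hpos : 0 < a₂.1)
    (hEq : zwrMul a₁ a₂ = zwrMul b₁ b₂) : Goal a₁ a₂ b₁ b₂ := by
  refine ⟨zwrOne G, a₁, b₁, zwrMul (zwrInv b₁) a₂,
    zwrS_one, ha₁, hb₁, zwrS_mul (zwrS_inv hb₁) ha₂,
    rLE_refl _, p₁, p₃, rLE_one_of_fst_pos _ (by rw [zwr_mul_fst, zwr_inv_fst]; omega),
    ?_, ?_, ?_, ?_⟩
  · exact (zwr_one_mul a₁).symm
  · exact (zwr_mul_inv_cancel_left b₁ a₂).symm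
  · exact (zwr_one_mul b₁).symm
  · have h1 : b₂ = zwrMul (zwrMul (zwrInv b₁) a₁) a₂ := by
      rw [zwr_assoc, hEq, zwr_inv_mul_cancel_left]
    rw [zwr_comm0 (zwrInv b₁) a₁ (by rw [zwr_inv_fst, hb0, neg_zero]) ha0,
      zwr_assoc] at h1
    exact h1

lemma matD {a₁ a₂ b₁ b₂ : ℤ × (ℤ → G)}
    (ha₂ : a₂ ∈ zwrS G) (hb₁ : b₁ ∈ zwrS G) (hb₂ : b₂ ∈ zwrS G)
    (p₂ : rLE (zwrOne G) a₂) (p₄ : rLE (zwrOne G) b₂)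
    (ha0 : a₂.1 = 0) (hb0 : b₂.1 = 0) (hpos : 0 < b₁.1)
    (hEq : zwrMul a₁ a₂ = zwrMul b₁ b₂) : Goal a₁ a₂ b₁ b₂ := by
  refine ⟨zwrMul b₁ (zwrInv a₂), b₂, a₂, zwrOne G,
    zwrS_mul hb₁ (zwrS_inv ha₂), hb₂, ha₂, zwrS_one,
    rLE_one_of_fst_pos _ (by rw [zwr_mul_fst, zwr_inv_fst]; omega),
    p₄, p₂, rLE_refl _, ?_, ?_, ?_, ?_⟩
  · have h1 : a₁ = zwrMul (zwrMul a₁ a₂) (zwrInv a₂) := by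
      rw [zwr_assoc, zwr_mul_inv, zwr_mul_one]
    rw [hEq, zwr_assoc,
      zwr_comm0 b₂ (zwrInv a₂) hb0 (by rw [zwr_inv_fst, ha0, neg_zero]),
      ← zwr_assoc] at h1
    exact h1
  · exact (zwr_mul_one a₂).symm
  · rw [zwr_assoc, zwr_inv_mul, zwr_mul_one]
  · exact (zwr_mul_one b₂).symm

end Forward

end ZwrAux

namespace ZwrAux

section ForwardMain

variable {G : Type*} [CommGroup G] [PartialOrder G]
  [CovariantClass G G (· * ·) (· ≤ ·)]
  [CovariantClass G G (Function.swap (· * ·)) (· ≤ ·)]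

local instance : IsOrderedMonoid G :=
  { mul_le_mul_left := fun _ _ h c => mul_le_mul_left h c }

lemma forward (hdir : ∀ x y : G, ∃ z : G, x ≤ z ∧ y ≤ z)
    (hrdp : RDPWith (fun a b : G => a * b) 1 (· ≤ ·)) :
    RDPWithOn (zwrS G) (fun p q : ℤ × (ℤ → G) => zwrMul p q) (zwrOne G) rLE := by
  intro a₁ a₂ b₁ b₂ ha₁ ha₂ hb₁ hb₂ p₁ p₂ p₃ p₄ hEq
  dsimp only at hEq
  show Goal a₁ a₂ b₁ b₂
  have hsum : a₁.1 + a₂.1 = b₁.1 + b₂.1 := by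
    have := congrArg Prod.fst hEq
    simpa [zwr_mul_fst] using this
  have hn₁ := rLE_one_fst_nonneg a₁ p₁
  have hn₂ := rLE_one_fst_nonneg a₂ p₂
  have hm₁ := rLE_one_fst_nonneg b₁ p₃
  have hm₂ := rLE_one_fst_nonneg b₂ p₄
  rcases lt_trichotomy a₁.1 b₁.1 with hlt | heq | hgt
  · exact matA ha₁ hb₁ hb₂ p₁ p₄
      (rLE_one_of_fst_pos _ (by rw [zwr_mul_fst, zwr_inv_fst]; omega)) hEq
  · -- equal first components
    have heq2 : a₂.1 = b₂.1 := by omega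
    by_cases h10 : a₁.1 = 0
    · by_cases h20 : a₂.1 = 0
      · -- the core case: everything lives in the kernel
        have hb10 : b₁.1 = 0 := by omega
        have hb20 : b₂.1 = 0 := by omega
        have hmaster : ∀ i, a₁.2 i * a₂.2 i = b₁.2 i * b₂.2 i := by
          intro i
          have := congrFun (congrArg Prod.snd hEq) i
          simpa [zwrMul, h10, hb10] using this
        obtain ⟨u11, u12, u21, u22, F11, F12, F21, F22, K11, K12, K21, K22,
          E1, E2, E3, E4⟩ :=
          kcore hdir hrdp a₁.2 a₂.2 b₁.2 b₂.2 ha₁ ha₂ hb₁ hb₂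
            (rLE_one_KP a₁ p₁ h10) (rLE_one_KP a₂ p₂ h20)
            (rLE_one_KP b₁ p₃ hb10) (rLE_one_KP b₂ p₄ hb20) hmaster
        refine ⟨((0:ℤ), u11), ((0:ℤ), u12), ((0:ℤ), u21), ((0:ℤ), u22),
          F11, F12, F21, F22,
          rLE_one_of_KP _ K11, rLE_one_of_KP _ K12,
          rLE_one_of_KP _ K21, rLE_one_of_KP _ K22, ?_, ?_, ?_, ?_⟩
        · refine Prod.ext_iff.mpr ⟨by simp [h10, zwr_mul_fst], funext fun i => ?_⟩
          show a₁.2 i = u11 i * u12 (i + (0:ℤ))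
          rw [add_zero]
          exact E1 i
        · refine Prod.ext_iff.mpr ⟨by simp [h20, zwr_mul_fst], funext fun i => ?_⟩
          show a₂.2 i = u21 i * u22 (i + (0:ℤ))
          rw [add_zero]
          exact E2 i
        · refine Prod.ext_iff.mpr ⟨by simp [hb10, zwr_mul_fst], funext fun i => ?_⟩
          show b₁.2 i = u11 i * u21 (i + (0:ℤ))
          rw [add_zero]
          exact E3 i
        · refine Prod.ext_iff.mpr ⟨by simp [hb20, zwr_mul_fst], funext fun i => ?_⟩
          show b₂.2 i = u12 i * u22 (i + (0:ℤ))
          rw [add_zero]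
          exact E4 i
      · -- a₁.1 = 0 < a₂.1
        exact matC ha₁ ha₂ hb₁ p₁ p₃ h10 (by omega) (by omega) hEq
    · by_cases h20 : a₂.1 = 0
      · exact matD ha₂ hb₁ hb₂ p₂ p₄ h20 (by omega) (by omega) hEq
      · -- both strictly positive
        by_cases hc1 : rLE a₁ b₁
        · exact matA ha₁ hb₁ hb₂ p₁ p₄ (rLE_one_sub hc1) hEq
        · by_cases hc2 : rLE b₁ a₁
          · exact matB ha₁ ha₂ hb₁ p₂ p₃ (rLE_one_sub hc2) hEq
          · -- incomparable case
            set ε := zwrMul (zwrInv a₁) b₁ with hεdef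
            have hε0 : ε.1 = 0 := by rw [hεdef, zwr_mul_fst, zwr_inv_fst]; omega
            have hεS : ε ∈ zwrS G := zwrS_mul (zwrS_inv ha₁) hb₁
            have hεne : ε.2 ≠ fun _ => 1 := by
              intro h
              apply hc1
              left
              have hone : ε = zwrOne G := Prod.ext_iff.mpr ⟨hε0, h⟩
              have hb : b₁ = zwrMul a₁ ε := (zwr_mul_inv_cancel_left a₁ b₁).symm
              rw [hone, zwr_mul_one] at hb
              exact hb.symm
            obtain ⟨t, htne, httop⟩ := exists_top hεS hεne
            have hnotpos : ¬ 1 < ε.2 t := by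
              intro h
              exact hc1 (Or.inr (Or.inr ⟨hε0, t, h, httop⟩))
            have hinvmul : zwrMul (zwrInv b₁) a₁ = zwrInv ε := by
              have h1 : zwrMul ε (zwrMul (zwrInv b₁) a₁) = zwrOne G := by
                rw [hεdef, zwr_assoc, zwr_mul_inv_cancel_left, zwr_inv_mul]
              have h2 := congrArg (fun r => zwrMul (zwrInv ε) r) h1
              rwa [zwr_inv_mul_cancel_left, zwr_mul_one] at h2
            have hnotneg : ¬ ε.2 t < 1 := by
              intro h
              apply hc2
              right
              rw [hinvmul]
              refine Or.inr ⟨by rw [zwr_inv_fst, hε0, neg_zero], t, ?_, ?_⟩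
              · show 1 < (ε.2 (t - ε.1))⁻¹
                rw [hε0, sub_zero]
                exact Left.one_lt_inv_iff.mpr h
              · intro i hi
                show (ε.2 (i - ε.1))⁻¹ = 1
                rw [hε0, sub_zero, httop i hi, inv_one]
            have hcnle : ¬ ε.2 t ≤ 1 := fun h =>
              (lt_or_eq_of_le h).elim hnotneg (fun h' => htne h')
            obtain ⟨p, hp⟩ := exists_one_lt hdir (ε.2 t) hcnle
            obtain ⟨w, hw1, hw2⟩ := hdir 1 (ε.2 t)⁻¹
            set d : ℤ × (ℤ → G) := ((0:ℤ), fun i => if i = t then (w * p)⁻¹ else 1)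
              with hd
            have hdS : d ∈ zwrS G := by
              rw [mem_zwrS_iff]
              refine Set.Finite.subset (Set.finite_singleton t) ?_
              intro i hi
              rw [Function.mem_mulSupport] at hi
              by_contra hcon
              simp only [Set.mem_singleton_iff] at hcon
              exact hi (by simp [hd, hcon])
            refine ⟨zwrMul a₁ d, zwrInv d, zwrMul (zwrInv d) ε,
              zwrMul (zwrInv ε) (zwrMul d a₂),
              zwrS_mul ha₁ hdS, zwrS_inv hdS, zwrS_mul (zwrS_inv hdS) hεS,
              zwrS_mul (zwrS_inv hεS) (zwrS_mul hdS ha₂),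
              ?_, ?_, ?_, ?_, ?_, ?_, ?_, ?_⟩
            · refine rLE_one_of_fst_pos _ ?_
              rw [zwr_mul_fst]
              have : d.1 = 0 := rfl
              omega
            · refine rLE_one_of_posF _ (by rw [zwr_inv_fst]; rfl) ⟨t, ?_, ?_⟩
              · show 1 < (d.2 (t - d.1))⁻¹
                have hwp : (1:G) < w * p := Left.one_lt_mul_of_le_of_lt hw1 hp
                simpa [hd] using hwp
              · intro i hi
                show (d.2 (i - d.1))⁻¹ = 1
                simp [hd, sub_zero, (ne_of_gt hi : i ≠ t)]
            · refine rLE_one_of_posF _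
                (by rw [zwr_mul_fst, zwr_inv_fst, hε0]; rfl) ⟨t, ?_, ?_⟩
              · show 1 < (d.2 (t - d.1))⁻¹ * ε.2 (t + (zwrInv d).1)
                have h1 : (1:G) ≤ w * ε.2 t := by
                  have := mul_le_mul_left hw2 (ε.2 t)
                  rwa [inv_mul_cancel] at this
                have h2 : (1:G) < w * ε.2 t * p := Left.one_lt_mul_of_le_of_lt h1 hp
                rw [mul_right_comm] at h2
                simpa [hd, zwr_inv_fst, mul_assoc] using h2
              · intro i hi
                show (d.2 (i - d.1))⁻¹ * ε.2 (i + (zwrInv d).1) = 1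
                simp [hd, zwr_inv_fst, (ne_of_gt hi : i ≠ t), httop i hi]
            · refine rLE_one_of_fst_pos _ ?_
              show 0 < (zwrInv ε).1 + (d.1 + a₂.1)
              rw [zwr_inv_fst, hε0]
              have : d.1 = 0 := rfl
              omega
            · rw [zwr_assoc, zwr_mul_inv, zwr_mul_one]
            · rw [zwr_assoc, zwr_mul_inv_cancel_left]
              rw [zwr_inv_mul_cancel_left]
            · have : zwrMul (zwrMul a₁ d) (zwrMul (zwrInv d) ε) = b₁ := by
                rw [zwr_assoc, zwr_mul_inv_cancel_left, hεdef, zwr_mul_inv_cancel_left]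
              exact this.symm
            · have hcomm : zwrMul (zwrInv ε) d = zwrMul d (zwrInv ε) :=
                zwr_comm0 _ _ (by rw [zwr_inv_fst, hε0, neg_zero]) rfl
              calc b₂ = zwrMul (zwrInv b₁) (zwrMul b₁ b₂) :=
                    (zwr_inv_mul_cancel_left b₁ b₂).symm
                _ = zwrMul (zwrInv b₁) (zwrMul a₁ a₂) := by rw [hEq]
                _ = zwrMul (zwrMul (zwrInv b₁) a₁) a₂ := by rw [zwr_assoc]
                _ = zwrMul (zwrInv ε) a₂ := by rw [hinvmul]
                _ = zwrMul (zwrInv d) (zwrMul d (zwrMul (zwrInv ε) a₂)) :=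
                    (zwr_inv_mul_cancel_left _ _).symm
                _ = zwrMul (zwrInv d) (zwrMul (zwrMul d (zwrInv ε)) a₂) := by
                    rw [zwr_assoc]
                _ = zwrMul (zwrInv d) (zwrMul (zwrMul (zwrInv ε) d) a₂) := by
                    rw [hcomm]
                _ = zwrMul (zwrInv d) (zwrMul (zwrInv ε) (zwrMul d a₂)) := by
                    rw [zwr_assoc]
  · exact matB ha₁ ha₂ hb₁ p₂ p₃
      (rLE_one_of_fst_pos _ (by rw [zwr_mul_fst, zwr_inv_fst]; omega)) hEq

end ForwardMain

end ZwrAux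

namespace ZwrAux

section Backward

variable {G : Type*} [CommGroup G] [PartialOrder G]
  [CovariantClass G G (· * ·) (· ≤ ·)]
  [CovariantClass G G (Function.swap (· * ·)) (· ≤ ·)]

local instance : IsOrderedMonoid G :=
  { mul_le_mul_left := fun _ _ h c => mul_le_mul_left h c }

lemma backward
    (hW : RDPWithOn (zwrS G) (fun p q : ℤ × (ℤ → G) => zwrMul p q) (zwrOne G) rLE) :
    RDPWith (fun a b : G => a * b) 1 (· ≤ ·) := by
  intro a₁ a₂ b₁ b₂ q₁ q₂ q₃ q₄ hEq
  dsimp only at hEq ⊢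
  set ι : G → ℤ × (ℤ → G) := fun g => ((0:ℤ), fun i => if i = 0 then g else 1) with hι
  have hιS : ∀ g, ι g ∈ zwrS G := by
    intro g
    rw [mem_zwrS_iff]
    refine Set.Finite.subset (Set.finite_singleton 0) ?_
    intro i hi
    rw [Function.mem_mulSupport] at hi
    by_contra hcon
    simp only [Set.mem_singleton_iff] at hcon
    exact hi (by simp [hι, hcon])
  have hιpos : ∀ g : G, 1 ≤ g → rLE (zwrOne G) (ι g) := by
    intro g hg
    rcases lt_or_eq_of_le hg with h | h
    · refine rLE_one_of_posF _ rfl ⟨0, ?_, ?_⟩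
      · show 1 < (if (0:ℤ) = 0 then g else 1)
        simpa using h
      · intro i hi
        show (if i = 0 then g else 1) = 1
        simp [(ne_of_gt hi : i ≠ 0)]
    · refine (rLE_one_iff _).mpr (Or.inl (Prod.ext_iff.mpr ⟨rfl, funext fun i => ?_⟩))
      show (if i = 0 then g else 1) = 1
      by_cases h0 : i = 0 <;> simp [h0, ← h]
  have hmulι : ∀ g h : G, zwrMul (ι g) (ι h) = ι (g * h) := by
    intro g h
    refine Prod.ext_iff.mpr ⟨rfl, funext fun i => ?_⟩
    show (if i = 0 then g else 1) * (if i + 0 = 0 then h else 1)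
      = (if i = 0 then g * h else 1)
    rw [add_zero]
    by_cases h0 : i = 0 <;> simp [h0]
  have hEqW : zwrMul (ι a₁) (ι a₂) = zwrMul (ι b₁) (ι b₂) := by
    rw [hmulι, hmulι, hEq]
  obtain ⟨c11, c12, c21, c22, S11, S12, S21, S22, P11, P12, P21, P22,
    e1, e2, e3, e4⟩ :=
    hW (ι a₁) (ι a₂) (ι b₁) (ι b₂) (hιS _) (hιS _) (hιS _) (hιS _)
      (hιpos _ q₁) (hιpos _ q₂) (hιpos _ q₃) (hιpos _ q₄) hEqW
  dsimp only at e1 e2 e3 e4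
  have f1 : c11.1 + c12.1 = 0 := by
    have := congrArg Prod.fst e1
    rw [zwr_mul_fst] at this
    exact this.symm
  have f2 : c21.1 + c22.1 = 0 := by
    have := congrArg Prod.fst e2
    rw [zwr_mul_fst] at this
    exact this.symm
  have g11 := rLE_one_fst_nonneg _ P11
  have g12 := rLE_one_fst_nonneg _ P12
  have g21 := rLE_one_fst_nonneg _ P21
  have g22 := rLE_one_fst_nonneg _ P22
  have z11 : c11.1 = 0 := by omega
  have z12 : c12.1 = 0 := by omega
  have z21 : c21.1 = 0 := by omega
  have z22 : c22.1 = 0 := by omega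
  have k11 := rLE_one_KP _ P11 z11
  have k12 := rLE_one_KP _ P12 z12
  have k21 := rLE_one_KP _ P21 z21
  have k22 := rLE_one_KP _ P22 z22
  have E1 : ∀ i, c11.2 i * c12.2 i = (if i = 0 then a₁ else 1) := by
    intro i
    have h := congrFun (congrArg Prod.snd e1) i
    rw [show (zwrMul c11 c12).2 i = c11.2 i * c12.2 (i + c11.1) from rfl,
      z11, add_zero] at h
    exact h.symm
  have E2 : ∀ i, c21.2 i * c22.2 i = (if i = 0 then a₂ else 1) := by
    intro i
    have h := congrFun (congrArg Prod.snd e2) i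
    rw [show (zwrMul c21 c22).2 i = c21.2 i * c22.2 (i + c21.1) from rfl,
      z21, add_zero] at h
    exact h.symm
  have E3 : ∀ i, c11.2 i * c21.2 i = (if i = 0 then b₁ else 1) := by
    intro i
    have h := congrFun (congrArg Prod.snd e3) i
    rw [show (zwrMul c11 c21).2 i = c11.2 i * c21.2 (i + c11.1) from rfl,
      z11, add_zero] at h
    exact h.symm
  have E4 : ∀ i, c12.2 i * c22.2 i = (if i = 0 then b₂ else 1) := by
    intro i
    have h := congrFun (congrArg Prod.snd e4) i
    rw [show (zwrMul c12 c22).2 i = c12.2 i * c22.2 (i + c12.1) from rfl,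
      z12, add_zero] at h
    exact h.symm
  -- all four functions vanish above 0
  have hUfin : (Function.mulSupport c11.2 ∪ (Function.mulSupport c12.2 ∪
      (Function.mulSupport c21.2 ∪ Function.mulSupport c22.2))).Finite :=
    Set.Finite.union S11 (Set.Finite.union S12 (Set.Finite.union S21 S22))
  have hvan : ∀ i, 0 < i →
      c11.2 i = 1 ∧ c12.2 i = 1 ∧ c21.2 i = 1 ∧ c22.2 i = 1 := by
    by_contra hcon
    push_neg at hcon
    obtain ⟨i₀, hi₀, hbad0⟩ := hcon
    have hbad : ¬ (c11.2 i₀ = 1 ∧ c12.2 i₀ = 1 ∧ c21.2 i₀ = 1 ∧ c22.2 i₀ = 1) :=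
      fun h => hbad0 h.1 h.2.1 h.2.2.1 h.2.2.2
    have hmemF : ∀ i, 0 < i →
        (¬ (c11.2 i = 1 ∧ c12.2 i = 1 ∧ c21.2 i = 1 ∧ c22.2 i = 1)) →
        i ∈ hUfin.toFinset.filter (fun i => 0 < i) := by
      intro i hi hb
      rw [Finset.mem_filter, Set.Finite.mem_toFinset]
      refine ⟨?_, hi⟩
      by_contra hns
      simp only [Set.mem_union, Function.mem_mulSupport, not_or, not_not] at hns
      exact hb ⟨hns.1, hns.2.1, hns.2.2.1, hns.2.2.2⟩
    have hne : (hUfin.toFinset.filter (fun i => 0 < i)).Nonempty :=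
      ⟨i₀, hmemF i₀ hi₀ hbad⟩
    have hTmem := (hUfin.toFinset.filter (fun i => 0 < i)).max'_mem hne
    rw [Finset.mem_filter, Set.Finite.mem_toFinset] at hTmem
    set T := (hUfin.toFinset.filter (fun i => 0 < i)).max' hne with hT
    have hTpos : 0 < T := hTmem.2
    have hTtriv : ∀ i, T < i → c11.2 i = 1 ∧ c12.2 i = 1 ∧ c21.2 i = 1 ∧ c22.2 i = 1 := by
      intro i hi
      by_contra hb
      exact absurd ((hUfin.toFinset.filter (fun i => 0 < i)).le_max' i
        (hmemF i (lt_trans hTpos hi) hb)) (not_le.mpr hi)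
    have hTne : T ≠ 0 := ne_of_gt hTpos
    have hP1 : c11.2 T * c12.2 T = 1 := by rw [E1 T, if_neg hTne]
    have hP2 : c21.2 T * c22.2 T = 1 := by rw [E2 T, if_neg hTne]
    have hP3 : c11.2 T * c21.2 T = 1 := by rw [E3 T, if_neg hTne]
    have topval : ∀ φ : ℤ → G, KP φ → φ T ≠ 1 →
        (∀ i, T < i → φ i = 1) → 1 < φ T := by
      intro φ k hne' htriv
      rcases k with h | h
      · exact absurd (congrFun h T) hne'
      · obtain ⟨j, hj, hj2⟩ := h
        rcases lt_trichotomy j T with h0 | h0 | h0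
        · exact absurd (hj2 T h0) hne'
        · exact h0 ▸ hj
        · exact absurd (htriv j h0) (ne_of_gt hj)
    by_cases h11T : c11.2 T = 1
    · have h12T : c12.2 T = 1 := by
        have := hP1
        rw [h11T, one_mul] at this
        exact this
      have h21T : c21.2 T = 1 := by
        have := hP3
        rw [h11T, one_mul] at this
        exact this
      have h22T : c22.2 T = 1 := by
        have := hP2
        rw [h21T, one_mul] at this
        exact this
      rcases hTmem.1 with h | h | h | h
      · exact (Function.mem_mulSupport.mp h) h11T
      · exact (Function.mem_mulSupport.mp h) h12T
      · exact (Function.mem_mulSupport.mp h) h21T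
      · exact (Function.mem_mulSupport.mp h) h22T
    · have h12T : c12.2 T ≠ 1 := by
        intro h
        apply h11T
        have := hP1
        rw [h, mul_one] at this
        exact this
      have l11 : 1 < c11.2 T := topval _ k11 h11T (fun i hi => (hTtriv i hi).1)
      have l12 : 1 < c12.2 T := topval _ k12 h12T (fun i hi => (hTtriv i hi).2.1)
      have : (1:G) < c11.2 T * c12.2 T := Left.one_lt_mul_of_le_of_lt (le_of_lt l11) l12
      rw [hP1] at this
      exact lt_irrefl 1 this
  have hdval : ∀ (φ : ℤ → G), KP φ → (∀ i, 0 < i → φ i = 1) → 1 ≤ φ 0 := by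
    intro φ k hv
    rcases k with h | h
    · rw [congrFun h 0]
    · obtain ⟨j, hj, hj2⟩ := h
      rcases lt_trichotomy j 0 with h0 | h0 | h0
      · rw [hj2 0 h0]
      · exact le_of_lt (h0 ▸ hj)
      · rw [hv j h0] at hj
        exact absurd hj (lt_irrefl 1)
  refine ⟨c11.2 0, c12.2 0, c21.2 0, c22.2 0,
    hdval _ k11 (fun i hi => (hvan i hi).1),
    hdval _ k12 (fun i hi => (hvan i hi).2.1),
    hdval _ k21 (fun i hi => (hvan i hi).2.2.1),
    hdval _ k22 (fun i hi => (hvan i hi).2.2.2), ?_, ?_, ?_, ?_⟩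
  · have := E1 0
    rw [if_pos rfl] at this
    exact this.symm
  · have := E2 0
    rw [if_pos rfl] at this
    exact this.symm
  · have := E3 0
    rw [if_pos rfl] at this
    exact this.symm
  · have := E4 0
    rw [if_pos rfl] at this
    exact this.symm

end Backward

end ZwrAux

namespace ZwrAux

section Transfer

variable {G : Type*} [CommGroup G] [PartialOrder G]
  [CovariantClass G G (· * ·) (· ≤ ·)]
  [CovariantClass G G (Function.swap (· * ·)) (· ≤ ·)]

/-- The reflection anti-automorphism exchanging the left and right orders. -/
def Rt (p : ℤ × (ℤ → G)) : ℤ × (ℤ → G) := (p.1, fun i => p.2 (-i - p.1))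

lemma Rt_invol (p : ℤ × (ℤ → G)) : Rt (Rt p) = p := by
  refine Prod.ext_iff.mpr ⟨rfl, funext fun i => ?_⟩
  show p.2 (-(-i - p.1) - p.1) = p.2 i
  rw [show -(-i - p.1) - p.1 = i by ring]

lemma Rt_one : Rt (zwrOne G) = zwrOne G := rfl

lemma Rt_mul (p q : ℤ × (ℤ → G)) : Rt (zwrMul p q) = zwrMul (Rt q) (Rt p) := by
  refine Prod.ext_iff.mpr ⟨?_, funext fun i => ?_⟩
  · show p.1 + q.1 = q.1 + p.1
    ring
  · show p.2 (-i - (p.1 + q.1)) * q.2 (-i - (p.1 + q.1) + p.1)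
      = q.2 (-i - q.1) * p.2 (-(i + q.1) - p.1)
    rw [show -i - (p.1 + q.1) + p.1 = -i - q.1 by ring,
      show -i - (p.1 + q.1) = -(i + q.1) - p.1 by ring, mul_comm]

lemma Rt_mem {p : ℤ × (ℤ → G)} (h : p ∈ zwrS G) : Rt p ∈ zwrS G := by
  rw [mem_zwrS_iff] at h ⊢
  have hsub : (Function.mulSupport fun i => p.2 (-i - p.1)) ⊆
      (fun i : ℤ => -i - p.1) ⁻¹' (Function.mulSupport p.2) := fun i hi => hi
  refine Set.Finite.subset (Set.Finite.preimage ?_ h) hsub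
  exact Set.injOn_of_injective (fun a b hab => by omega)

lemma rPos_Rt (p : ℤ × (ℤ → G)) : rPos (Rt p) ↔ lPos p := by
  constructor
  · rintro (h | ⟨h0, j, hj, hj2⟩)
    · exact Or.inl h
    · refine Or.inr ⟨h0, -j - p.1, hj, ?_⟩
      intro i hi
      have h : p.2 (-(-i - p.1) - p.1) = 1 := hj2 (-i - p.1) (by omega)
      rwa [show -(-i - p.1) - p.1 = i by ring] at h
  · rintro (h | ⟨h0, j, hj, hj2⟩)
    · exact Or.inl h
    · refine Or.inr ⟨h0, -j - p.1, ?_, ?_⟩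
      · show 1 < p.2 (-(-j - p.1) - p.1)
        rw [show -(-j - p.1) - p.1 = j by ring]
        exact hj
      · intro i hi
        show p.2 (-i - p.1) = 1
        exact hj2 _ (by omega)

lemma pos_transfer_lr {p : ℤ × (ℤ → G)} (h : lLE (zwrOne G) p) :
    rLE (zwrOne G) (Rt p) := by
  rcases (lLE_one_iff p).mp h with h | h
  · exact (rLE_one_iff _).mpr (Or.inl (by rw [h, Rt_one]))
  · exact (rLE_one_iff _).mpr (Or.inr ((rPos_Rt p).mpr h))

lemma pos_transfer_rl {p : ℤ × (ℤ → G)} (h : rLE (zwrOne G) p) :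
    lLE (zwrOne G) (Rt p) := by
  rcases (rLE_one_iff p).mp h with h | h
  · exact (lLE_one_iff _).mpr (Or.inl (by rw [h, Rt_one]))
  · refine (lLE_one_iff _).mpr (Or.inr ?_)
    have := (rPos_Rt (Rt p)).symm
    rw [Rt_invol] at this
    exact this.mpr h

lemma lr_transfer :
    RDPWithOn (zwrS G) (fun p q : ℤ × (ℤ → G) => zwrMul p q) (zwrOne G) lLE ↔
    RDPWithOn (zwrS G) (fun p q : ℤ × (ℤ → G) => zwrMul p q) (zwrOne G) rLE := by
  constructor
  · intro hL
    intro a₁ a₂ b₁ b₂ ha₁ ha₂ hb₁ hb₂ p₁ p₂ p₃ p₄ hEq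
    dsimp only at hEq ⊢
    obtain ⟨d11, d12, d21, d22, S11, S12, S21, S22, P11, P12, P21, P22,
      e1, e2, e3, e4⟩ :=
      hL (Rt a₂) (Rt a₁) (Rt b₂) (Rt b₁)
        (Rt_mem ha₂) (Rt_mem ha₁) (Rt_mem hb₂) (Rt_mem hb₁)
        (pos_transfer_rl p₂) (pos_transfer_rl p₁)
        (pos_transfer_rl p₄) (pos_transfer_rl p₃)
        (by dsimp only; rw [← Rt_mul, ← Rt_mul, hEq])
    dsimp only at e1 e2 e3 e4
    refine ⟨Rt d22, Rt d21, Rt d12, Rt d11,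
      Rt_mem S22, Rt_mem S21, Rt_mem S12, Rt_mem S11,
      pos_transfer_lr P22, pos_transfer_lr P21,
      pos_transfer_lr P12, pos_transfer_lr P11, ?_, ?_, ?_, ?_⟩
    · have := congrArg Rt e2
      rwa [Rt_invol, Rt_mul] at this
    · have := congrArg Rt e1
      rwa [Rt_invol, Rt_mul] at this
    · have := congrArg Rt e4
      rwa [Rt_invol, Rt_mul] at this
    · have := congrArg Rt e3
      rwa [Rt_invol, Rt_mul] at this
  · intro hR
    intro a₁ a₂ b₁ b₂ ha₁ ha₂ hb₁ hb₂ p₁ p₂ p₃ p₄ hEq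
    dsimp only at hEq ⊢
    obtain ⟨d11, d12, d21, d22, S11, S12, S21, S22, P11, P12, P21, P22,
      e1, e2, e3, e4⟩ :=
      hR (Rt a₂) (Rt a₁) (Rt b₂) (Rt b₁)
        (Rt_mem ha₂) (Rt_mem ha₁) (Rt_mem hb₂) (Rt_mem hb₁)
        (pos_transfer_lr p₂) (pos_transfer_lr p₁)
        (pos_transfer_lr p₄) (pos_transfer_lr p₃)
        (by dsimp only; rw [← Rt_mul, ← Rt_mul, hEq])
    dsimp only at e1 e2 e3 e4
    refine ⟨Rt d22, Rt d21, Rt d12, Rt d11,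
      Rt_mem S22, Rt_mem S21, Rt_mem S12, Rt_mem S11,
      pos_transfer_rl P22, pos_transfer_rl P21,
      pos_transfer_rl P12, pos_transfer_rl P11, ?_, ?_, ?_, ?_⟩
    · have := congrArg Rt e2
      rwa [Rt_invol, Rt_mul] at this
    · have := congrArg Rt e1
      rwa [Rt_invol, Rt_mul] at this
    · have := congrArg Rt e4
      rwa [Rt_invol, Rt_mul] at this
    · have := congrArg Rt e3
      rwa [Rt_invol, Rt_mul] at this

end Transfer

end ZwrAux
/-- For a directed non-atomistic Abelian po-group `G`, the right
wreath product `ℤ →wr G` satisfies RDP iff the left wreath product `ℤ ←wr G`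
satisfies RDP iff `G` satisfies RDP. -/
theorem zwr_rdp_iff_rdp {G : Type*} [CommGroup G] [PartialOrder G]
    [CovariantClass G G (· * ·) (· ≤ ·)]
    [CovariantClass G G (Function.swap (· * ·)) (· ≤ ·)]
    (hdir : ∀ x y : G, ∃ z : G, x ≤ z ∧ y ≤ z)
    (hna : ∀ g : G, 1 < g → ∃ g' : G, 1 < g' ∧ g' < g) :
    (RDPWithOn (zwrS G) (fun p q : ℤ × (ℤ → G) => zwrMul p q) (zwrOne G) rLE ↔
      RDPWith (fun a b : G => a * b) 1 (· ≤ ·)) ∧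
    (RDPWithOn (zwrS G) (fun p q : ℤ × (ℤ → G) => zwrMul p q) (zwrOne G) lLE ↔
      RDPWith (fun a b : G => a * b) 1 (· ≤ ·)) := by
  constructor
  · exact ⟨ZwrAux.backward, ZwrAux.forward hdir⟩
  · constructor
    · intro hL
      exact ZwrAux.backward (ZwrAux.lr_transfer.mp hL)
    · intro hG
      exact ZwrAux.lr_transfer.mpr (ZwrAux.forward hdir hG)
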